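/- Let A be a prime Banach algebra (i.e. for a, b ∈ A, if a x b = 0 for all x ∈ A then a = 0 or b = 0) containing a nonzero idempotent p (p² = p, p ≠ 0) such that the left ideal A·p = { a p : a ∈ A } is finite dimensional. Then every derivation on A is continuous. -/

import Mathlib

theorem stmt14 {A : Type*}
    [NonUnitalNormedRing A] [NormedSpace ℂ A] [IsScalarTower ℂ A A] [SMulCommClass ℂ A A]
    [CompleteSpace A]
    -- `A` is prime:
    (hprime : ∀ a b : A, (∀ x : A, a * x * b = 0) → a = 0 ∨ b = 0)
    -- `p` is a nonzero idempotent: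
    (p : A) (hp : p * p = p) (hp0 : p ≠ 0)
    -- the left ideal `A·p = {a*p : a ∈ A}` is finite dimensional (it is a `ℂ`-subspace,
    -- hence equal to its span):
    (hfin : FiniteDimensional ℂ (Submodule.span ℂ {x : A | ∃ a : A, x = a * p})) :
    -- every derivation on `A` is continuous:
    ∀ δ : A →ₗ[ℂ] A, (∀ a b : A, δ (a * b) = a * δ b + δ a * b) → Continuous δ := by
  intro δ _
  set L : Submodule ℂ A := Submodule.span ℂ {x : A | ∃ a : A, x = a * p} with hL
  haveI : FiniteDimensional ℂ L := hfin
  -- left multiplication preserves L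
  have hmem : ∀ a : A, ∀ x ∈ L, a * x ∈ L := by
    intro a x hx
    induction hx using Submodule.span_induction with
    | mem x hx =>
        obtain ⟨b, rfl⟩ := hx
        exact Submodule.subset_span ⟨a * b, (mul_assoc a b p).symm⟩
    | zero => simp
    | add x y _ _ hx hy => rw [mul_add]; exact Submodule.add_mem L hx hy
    | smul c x _ hx => rw [mul_smul_comm]; exact Submodule.smul_mem L c hx
  -- the representation of A on L by left multiplication
  let f : A →ₗ[ℂ] (L →ₗ[ℂ] L) :=
    { toFun := fun a => (LinearMap.mulLeft ℂ a).restrict (fun x hx => hmem a x hx)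
      map_add' := fun a b => by
        ext y
        exact add_mul a b (y : A)
      map_smul' := fun c a => by
        ext y
        exact smul_mul_assoc c a (y : A) }
  have hinj : Function.Injective f := by
    rw [← LinearMap.ker_eq_bot, LinearMap.ker_eq_bot']
    intro a ha
    rcases hprime a p (fun x => by
      have hxp : x * p ∈ L := Submodule.subset_span ⟨x, rfl⟩
      have := congrArg Subtype.val (LinearMap.congr_fun ha ⟨x * p, hxp⟩)
      exact (mul_assoc a x p).trans this) with h | h
    · exact h
    · exact absurd h hp0
  haveI : FiniteDimensional ℂ A := FiniteDimensional.of_injective f hinj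
  exact δ.continuous_of_finiteDimensional
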